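/- Let X be a metric space, equip X × X with the metric d((x₁, x₂), (y₁, y₂)) = d(x₁, y₁) + d(x₂, y₂), and define the dual Wasserstein functional W(p, q) := sup over all bounded 1-Lipschitz functions f of (∫ f dq − ∫ f dp) on the relevant space. Let (Y, 𝒴, σ) be a probability space and let G, Π : Y → (Borel probability measures on X) be two families such that the maps y ↦ W(G(y), Π(y)) and y ↦ W(G(y) ⊗ G(y), (1/2)(Π(y) ⊗ G(y)) + (1/2)(G(y) ⊗ Π(y))) are σ-measurable and σ-integrable. Then ∫ W(G(y) ⊗ G(y), (1/2)(Π(y) ⊗ G(y)) + (1/2)(G(y) ⊗ Π(y))) dσ(y) = 0 holds if and only if ∫ W(G(y), Π(y)) dσ(y) = 0. -/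

import Mathlib

open MeasureTheory
open scoped ENNReal

/-- The dual Wasserstein functional: the supremum, over all bounded 1-Lipschitz
functions `f`, of `∫ f dq - ∫ f dp`, taken in `[-∞, ∞]`. -/
noncomputable def dualW {X : Type*} [MetricSpace X] [MeasurableSpace X]
    (p q : Measure X) : EReal :=
  ⨆ f : {f : X → ℝ // (∃ C, ∀ x, |f x| ≤ C) ∧ LipschitzWith 1 f},
    (((∫ x, f.1 x ∂q) - ∫ x, f.1 x ∂p : ℝ) : EReal)

/-- `WithLp 1 (α × β)` (the product equipped with the ℓ¹ metric
`d ((x₁, x₂), (y₁, y₂)) = d x₁ y₁ + d x₂ y₂`) carries the product σ-algebra. -/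
instance withLpProdMeasurableSpace {α β : Type*} [MeasurableSpace α] [MeasurableSpace β] :
    MeasurableSpace (WithLp 1 (α × β)) := MeasurableSpace.comap WithLp.ofLp Prod.instMeasurableSpace

/-- Conversion from `EReal` to `ℝ≥0∞`, sending `⊤` to `⊤` and every `x ≤ 0` to `0`;
used to integrate extended-real-valued nonnegative functions. -/
noncomputable def erealToENNReal (x : EReal) : ℝ≥0∞ :=
  if x = ⊤ then ⊤ else ENNReal.ofReal x.toReal

section Aux

set_option linter.unusedSectionVars false
set_option linter.unnecessarySimpa false

variable {X : Type*} [MetricSpace X] [MeasurableSpace X]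

lemma dualW_nonneg (p q : Measure X) : 0 ≤ dualW p q := by
  have h := le_iSup (fun f : {f : X → ℝ // (∃ C, ∀ x, |f x| ≤ C) ∧ LipschitzWith 1 f} =>
    (((∫ x, f.1 x ∂q) - ∫ x, f.1 x ∂p : ℝ) : EReal))
    ⟨fun _ => 0, ⟨0, fun x => by simp⟩, fun x y => by simp⟩
  simpa [dualW] using h

lemma dualW_self (μ : Measure X) : dualW μ μ = 0 := by
  refine le_antisymm ?_ (dualW_nonneg μ μ)
  refine iSup_le fun f => ?_
  simp

lemma le_dualW {p q : Measure X} (f : X → ℝ) (hb : ∃ C, ∀ x, |f x| ≤ C)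
    (hl : LipschitzWith 1 f) :
    ((∫ x, f x ∂q - ∫ x, f x ∂p : ℝ) : EReal) ≤ dualW p q :=
  le_iSup (fun g : {f : X → ℝ // (∃ C, ∀ x, |f x| ≤ C) ∧ LipschitzWith 1 f} =>
    (((∫ x, g.1 x ∂q) - ∫ x, g.1 x ∂p : ℝ) : EReal)) ⟨f, hb, hl⟩

lemma integral_le_of_dualW_nonpos {p q : Measure X} (h : dualW p q ≤ 0)
    (f : X → ℝ) (hb : ∃ C, ∀ x, |f x| ≤ C) (hl : LipschitzWith 1 f) :
    ∫ x, f x ∂q ≤ ∫ x, f x ∂p := by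
  have h2 := (le_dualW f hb hl).trans h
  rw [EReal.coe_nonpos] at h2
  linarith

lemma integral_eq_of_dualW_nonpos {p q : Measure X} (h : dualW p q ≤ 0)
    (f : X → ℝ) (hb : ∃ C, ∀ x, |f x| ≤ C) (hl : LipschitzWith 1 f) :
    ∫ x, f x ∂q = ∫ x, f x ∂p := by
  refine le_antisymm (integral_le_of_dualW_nonpos h f hb hl) ?_
  obtain ⟨C, hC⟩ := hb
  have h2 := integral_le_of_dualW_nonpos h (fun x => -f x) ⟨C, fun x => by simpa using hC x⟩ hl.neg
  simp only [integral_neg] at h2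
  linarith

open Metric in
/-- Two probability measures agreeing on all bounded `1`-Lipschitz test functions are equal. -/
lemma eq_of_integral_lipschitz_eq [BorelSpace X] {p q : Measure X}
    [IsProbabilityMeasure p] [IsProbabilityMeasure q]
    (h : ∀ f : X → ℝ, (∃ C, ∀ x, |f x| ≤ C) → LipschitzWith 1 f →
      ∫ x, f x ∂q = ∫ x, f x ∂p) : p = q := by
  refine ext_of_generate_finite _ ?_ isPiSystem_isClosed ?_ (by simp)
  · rw [BorelSpace.measurable_eq (α := X), borel_eq_generateFrom_isClosed]
  · rintro C (hC : IsClosed C)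
    rcases C.eq_empty_or_nonempty with rfl | hne
    · simp
    set h' : ℕ → X → ℝ := fun n x => max (1 / (n + 1) - infDist x C) 0 with hh'
    have hlip : ∀ n, LipschitzWith 1 (h' n) := by
      intro n
      refine LipschitzWith.of_dist_le_mul fun x y => ?_
      have key : |h' n x - h' n y| ≤ dist x y := by
        calc |h' n x - h' n y| ≤ |(1 / (n + 1) - infDist x C) - (1 / (n + 1) - infDist y C)| :=
              abs_max_sub_max_le_abs _ _ _
          _ = |infDist y C - infDist x C| := by ring_nf
          _ ≤ dist x y := by
              rw [abs_sub_comm, ← Real.dist_eq]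
              simpa using (lipschitz_infDist_pt C).dist_le_mul x y
      simpa [Real.dist_eq] using key
    have hbd : ∀ n x, |h' n x| ≤ 1 := by
      intro n x
      rw [abs_le]
      constructor
      · linarith [le_max_right (1 / ((n : ℝ) + 1) - infDist x C) 0]
      · have h1 : (1 : ℝ) / (n + 1) ≤ 1 := by
          rw [div_le_one (by positivity)]; linarith
        have h2 : 0 ≤ infDist x C := infDist_nonneg
        have : 1 / ((n : ℝ) + 1) - infDist x C ≤ 1 := by linarith
        exact max_le this zero_le_one
    have hmeas : ∀ n, Measurable (h' n) := fun n => (hlip n).continuous.measurable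
    set F : ℕ → X → ℝ := fun n x => ((n : ℝ) + 1) * h' n x with hF
    have hFbd : ∀ n x, ‖F n x‖ ≤ 1 := by
      intro n x
      rcases le_or_gt (infDist x C) (1 / (n + 1)) with hle | hlt
      · have h0 : h' n x = 1 / (n + 1) - infDist x C := max_eq_left (by linarith)
        rw [Real.norm_eq_abs]
        show |((n : ℝ) + 1) * h' n x| ≤ 1
        rw [h0, abs_le]
        have hd : 0 ≤ infDist x C := infDist_nonneg
        have hn : (0:ℝ) < (n : ℝ) + 1 := by positivity
        constructor
        · nlinarith
        · have : ((n : ℝ) + 1) * (1 / (n + 1) - infDist x C) ≤ ((n : ℝ) + 1) * (1 / (n + 1)) := by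
            nlinarith
          rw [mul_one_div, div_self hn.ne'] at this
          linarith
      · have h0 : h' n x = 0 := max_eq_right (by linarith)
        simp [hF, h0]
    have hFtend : ∀ x, Filter.Tendsto (fun n => F n x) Filter.atTop
        (nhds (C.indicator (fun _ => (1:ℝ)) x)) := by
      intro x
      rcases em (x ∈ C) with hx | hx
      · have hd : infDist x C = 0 := infDist_zero_of_mem hx
        have : ∀ n, F n x = 1 := by
          intro n
          have hn : (0:ℝ) < (n : ℝ) + 1 := by positivity
          show ((n : ℝ) + 1) * h' n x = 1
          have hx1 : h' n x = 1 / ((n : ℝ) + 1) := by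
            show max (1 / ((n:ℝ) + 1) - infDist x C) 0 = _
            rw [hd, sub_zero]
            exact max_eq_left (by positivity)
          rw [hx1, mul_one_div, div_self hn.ne']
        rw [Set.indicator_of_mem hx]
        simpa [this] using tendsto_const_nhds
      · have hd : 0 < infDist x C := (hC.notMem_iff_infDist_pos hne).mp hx
        obtain ⟨N, hN⟩ := exists_nat_one_div_lt hd
        rw [Set.indicator_of_notMem hx]
        refine Filter.Tendsto.congr' ?_ tendsto_const_nhds
        rw [Filter.EventuallyEq, Filter.eventually_atTop]
        refine ⟨N, fun n hn => ?_⟩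
        have : (1:ℝ) / (n + 1) ≤ 1 / (N + 1) := by
          apply one_div_le_one_div_of_le (by positivity)
          exact_mod_cast by omega
        have h0 : h' n x = 0 := max_eq_right (by linarith)
        simp [hF, h0]
    have hFint : ∀ n, ∫ x, F n x ∂q = ∫ x, F n x ∂p := by
      intro n
      have := h (h' n) ⟨1, hbd n⟩ (hlip n)
      simp only [hF, integral_const_mul, this]
    have hkey : ∀ μ : Measure X, IsProbabilityMeasure μ →
        Filter.Tendsto (fun n => ∫ x, F n x ∂μ) Filter.atTop (nhds ((μ C).toReal)) := by
      intro μ hμ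
      have := tendsto_integral_of_dominated_convergence (μ := μ)
        (F := F) (f := C.indicator (fun _ => (1:ℝ))) (fun _ => (1:ℝ))
        (fun n => ((hmeas n).const_mul ((n:ℝ)+1)).aestronglyMeasurable)
        (integrable_const 1) (fun n => Filter.Eventually.of_forall (hFbd n))
        (Filter.Eventually.of_forall hFtend)
      have hind : ∫ x, C.indicator (fun _ => (1:ℝ)) x ∂μ = (μ C).toReal := by
        rw [integral_indicator_const (1:ℝ) hC.measurableSet]; simp; rfl
      rwa [hind] at this
    have h1 := hkey p ‹_›
    have h2 := hkey q ‹_›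
    have h2' : Filter.Tendsto (fun n => ∫ x, F n x ∂p) Filter.atTop (nhds ((q C).toReal)) :=
      h2.congr fun n => (hFint n)
    have := tendsto_nhds_unique h1 h2'
    exact ((ENNReal.toReal_eq_toReal_iff' (measure_ne_top q C) (measure_ne_top p C)).mp this.symm).symm

variable [BorelSpace X]

lemma integral_fst' (μ ν : Measure X) [SFinite μ] [SFinite ν] [IsProbabilityMeasure ν]
    {f : X → ℝ} (hf : Measurable f) :
    ∫ x : X × X, f x.1 ∂(μ.prod ν) = ∫ x, f x ∂μ := by
  have h1 : ∫ y, f y ∂((μ.prod ν).map Prod.fst) = ∫ x : X × X, f x.1 ∂(μ.prod ν) :=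
    integral_map measurable_fst.aemeasurable
      (by rw [Measure.map_fst_prod, measure_univ, one_smul]
          exact hf.aestronglyMeasurable)
  rw [← h1, Measure.map_fst_prod, measure_univ, one_smul]

lemma dualW_prod_nonpos_imp {p q : Measure X}
    [IsProbabilityMeasure p] [IsProbabilityMeasure q]
    (h : ∀ F : WithLp 1 (X × X) → ℝ, (∃ C, ∀ x, |F x| ≤ C) → LipschitzWith 1 F →
      (∫ x, F x ∂(((1 / 2 : ℝ≥0∞) • (q.prod p) + (1 / 2 : ℝ≥0∞) • (p.prod q)).map (WithLp.toLp 1)))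
        - (∫ x, F x ∂((p.prod p).map (WithLp.toLp 1))) ≤ 0)
    (f : X → ℝ) (hb : ∃ C, ∀ x, |f x| ≤ C) (hl : LipschitzWith 1 f) :
    ∫ x, f x ∂q ≤ ∫ x, f x ∂p := by
  obtain ⟨C, hC⟩ := hb
  set F : WithLp 1 (X × X) → ℝ := fun x => f (WithLp.ofLp x).1 with hFdef
  have hFb : ∃ C, ∀ x, |F x| ≤ C := ⟨C, fun x => hC _⟩
  have hFl : LipschitzWith 1 F := by
    have := hl.comp (LipschitzWith.prod_fst.comp (WithLp.prod_lipschitzWith_ofLp 1 X X))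
    simp only [mul_one] at this
    exact this
  have hfm : Measurable f := hl.continuous.measurable
  have hOf : Measurable (WithLp.ofLp : WithLp 1 (X × X) → X × X) := fun s hs => ⟨s, hs, rfl⟩
  have hT : Measurable (WithLp.toLp 1 : X × X → WithLp 1 (X × X)) := by
    rintro s ⟨t, ht, rfl⟩
    exact ht
  have hFm : Measurable F := by
    have h2 : Measurable fun a : X × X => f a.1 := hfm.comp measurable_fst
    exact h2.comp hOf
  have hmap : ∀ μ : Measure (X × X), ∫ x, F x ∂(μ.map (WithLp.toLp 1)) = ∫ z : X × X, f z.1 ∂μ :=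
    fun μ => integral_map hT.aemeasurable hFm.aestronglyMeasurable
  have key := h F hFb hFl
  rw [hmap, hmap] at key
  have e1 : ∫ x : X × X, f x.1 ∂(q.prod p) = ∫ x, f x ∂q := integral_fst' q p hfm
  have e2 : ∫ x : X × X, f x.1 ∂(p.prod q) = ∫ x, f x ∂p := integral_fst' p q hfm
  have e3 : ∫ x : X × X, f x.1 ∂(p.prod p) = ∫ x, f x ∂p := integral_fst' p p hfm
  haveI : IsProbabilityMeasure (q.prod p) := Measure.prod.instIsProbabilityMeasure _ _
  haveI : IsProbabilityMeasure (p.prod q) := Measure.prod.instIsProbabilityMeasure _ _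
  have hint1 : Integrable (fun x : X × X => f x.1) (q.prod p) := by
    exact ⟨(hfm.comp measurable_fst).aestronglyMeasurable,
      HasFiniteIntegral.of_bounded (C := C) (Filter.Eventually.of_forall fun x => by
        simpa [Real.norm_eq_abs] using hC x.1)⟩
  have hint2 : Integrable (fun x : X × X => f x.1) (p.prod q) := by
    exact ⟨(hfm.comp measurable_fst).aestronglyMeasurable,
      HasFiniteIntegral.of_bounded (C := C) (Filter.Eventually.of_forall fun x => by
        simpa [Real.norm_eq_abs] using hC x.1)⟩
  have hmix : ∫ (x : X × X), f x.1 ∂((1 / 2 : ℝ≥0∞) • (q.prod p) + (1 / 2 : ℝ≥0∞) • (p.prod q))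
      = (1 / 2) * ∫ (x : X × X), f x.1 ∂(q.prod p) + (1 / 2) * ∫ (x : X × X), f x.1 ∂(p.prod q) := by
    rw [integral_add_measure (hint1.smul_measure (c := (1 / 2 : ℝ≥0∞)) (by norm_num))
      (hint2.smul_measure (c := (1 / 2 : ℝ≥0∞)) (by norm_num)),
      integral_smul_measure, integral_smul_measure]
    norm_num [smul_eq_mul]
  rw [hmix, e1, e2, e3] at key
  linarith

end Aux

lemma measurable_erealToENNReal : Measurable erealToENNReal := by
  unfold erealToENNReal
  exact Measurable.ite measurableSet_eq measurable_const
    (ENNReal.measurable_ofReal.comp measurable_ereal_toReal)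

lemma erealToENNReal_eq_zero_iff {a : EReal} (ha : 0 ≤ a) : erealToENNReal a = 0 ↔ a = 0 := by
  unfold erealToENNReal
  rcases eq_or_ne a ⊤ with rfl | htop
  · simp
  · rw [if_neg htop, ENNReal.ofReal_eq_zero]
    have hbot : a ≠ ⊥ := fun h => by simp [h] at ha
    constructor
    · intro hle
      have hge : 0 ≤ a.toReal := by
        have := EReal.toReal_le_toReal ha (by simp) htop
        rwa [EReal.toReal_zero] at this
      have h0 : a.toReal = 0 := le_antisymm hle hge
      have hc := EReal.coe_toReal htop hbot
      rw [← hc, h0, EReal.coe_zero]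
    · rintro rfl; simp

/-- The expected 'mini-batch' dual Wasserstein distance vanishes if and only if the
expected dual Wasserstein distance vanishes. Here `G` and `Pi'` are families of Borel
probability measures on `X` indexed by a probability space `(Y, σ)`, `X × X` carries the
ℓ¹ metric, and both distance functions are assumed measurable and integrable. -/
theorem expected_minibatch_dualW_eq_zero_iff {X Y : Type*}
    [MetricSpace X] [MeasurableSpace X] [BorelSpace X]
    [MeasurableSpace Y] (σ : Measure Y) [IsProbabilityMeasure σ]
    (G Pi' : Y → Measure X)
    (hG : ∀ y, IsProbabilityMeasure (G y)) (hPi : ∀ y, IsProbabilityMeasure (Pi' y))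
    (hmeas₁ : Measurable fun y => dualW (G y) (Pi' y))
    (hint₁ : ∫⁻ y, erealToENNReal (dualW (G y) (Pi' y)) ∂σ < ⊤)
    (hmeas₂ : Measurable fun y =>
      dualW (X := WithLp 1 (X × X)) (((G y).prod (G y)).map (WithLp.toLp 1))
        (((1 / 2 : ℝ≥0∞) • ((Pi' y).prod (G y)) + (1 / 2 : ℝ≥0∞) • ((G y).prod (Pi' y))).map (WithLp.toLp 1)))
    (hint₂ : ∫⁻ y, erealToENNReal (dualW (X := WithLp 1 (X × X)) (((G y).prod (G y)).map (WithLp.toLp 1))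
        (((1 / 2 : ℝ≥0∞) • ((Pi' y).prod (G y)) + (1 / 2 : ℝ≥0∞) • ((G y).prod (Pi' y))).map (WithLp.toLp 1))) ∂σ
      < ⊤) :
    (∫⁻ y, erealToENNReal (dualW (X := WithLp 1 (X × X)) (((G y).prod (G y)).map (WithLp.toLp 1))
        (((1 / 2 : ℝ≥0∞) • ((Pi' y).prod (G y)) + (1 / 2 : ℝ≥0∞) • ((G y).prod (Pi' y))).map (WithLp.toLp 1))) ∂σ
        = 0)
      ↔ ∫⁻ y, erealToENNReal (dualW (G y) (Pi' y)) ∂σ = 0 := by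
  have hm2 : Measurable fun y => erealToENNReal (dualW (X := WithLp 1 (X × X))
      (((G y).prod (G y)).map (WithLp.toLp 1))
      (((1 / 2 : ℝ≥0∞) • ((Pi' y).prod (G y)) + (1 / 2 : ℝ≥0∞) • ((G y).prod (Pi' y))).map (WithLp.toLp 1))) :=
    measurable_erealToENNReal.comp hmeas₂
  have hm1 : Measurable fun y => erealToENNReal (dualW (G y) (Pi' y)) :=
    measurable_erealToENNReal.comp hmeas₁
  rw [lintegral_eq_zero_iff hm2, lintegral_eq_zero_iff hm1]
  refine Filter.eventually_congr (Filter.Eventually.of_forall fun y => ?_)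
  haveI := hG y; haveI := hPi y
  simp only [Function.comp_apply, Pi.zero_apply]
  rw [erealToENNReal_eq_zero_iff (dualW_nonneg _ _), erealToENNReal_eq_zero_iff (dualW_nonneg _ _)]
  constructor
  · intro h2
    refine le_antisymm ?_ (dualW_nonneg _ _)
    refine iSup_le fun f => ?_
    rw [EReal.coe_nonpos, sub_nonpos]
    refine dualW_prod_nonpos_imp (fun F hFb hFl => ?_) f.1 f.2.1 f.2.2
    exact sub_nonpos.mpr (integral_le_of_dualW_nonpos h2.le F hFb hFl)
  · intro h1
    have heq : G y = Pi' y :=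
      eq_of_integral_lipschitz_eq (fun f hb hl => integral_eq_of_dualW_nonpos h1.le f hb hl)
    rw [heq, ← add_smul, ENNReal.add_halves, one_smul]
    exact dualW_self _
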